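/- arXiv:2007.08461 — 2 statements merged into one kernel-verified Lean document; each statement's English description precedes it below -/
import Mathlib

section
/- (Support containment for the LASSO primal–dual witness; Proposition 1, part 1.) Let S ⊆ {1,…,N}, let γ* ∈ ℝ^N satisfy γ*_j = 0 for every j ∉ S, let ε ∈ ℝ^N, and set y := Ũ(γ* + ε) ∈ ℝ^m. Assume G := Ũ_SᵀŨ_S is invertible, λ > 0, and that the strict dual feasibility condition holds: for every vector v ∈ ℝ^S with ‖v‖_∞ ≤ 1 and every index j ∉ S, |λ·(Ũ_jᵀ Ũ_S G⁻¹ v) + Ũ_jᵀ (I_m − Π_S) Ũ ε| < λ. Then every global minimizer γ̂ of f_{y,λ} satisfies γ̂_j = 0 for all j ∉ S. -/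
open Matrix BigOperators Filter

lemma lasso_aux_le (a lam c : ℝ) (hc : 0 ≤ c) (h : ∀ s : ℝ, 0 < s → a ≤ lam + s * c) :
    a ≤ lam := by
  by_contra h'
  push_neg at h'
  rcases eq_or_lt_of_le hc with hc0 | hc0
  · have := h 1 one_pos
    rw [← hc0] at this
    linarith
  · have key := h ((a - lam) / (2 * c)) (div_pos (by linarith) (by positivity))
    have : (a - lam) / (2 * c) * c = (a - lam) / 2 := by field_simp
    rw [this] at key
    linarith

lemma lasso_aux_eq (x B c : ℝ) (hB : 0 < B) (h : ∀ s : ℝ, 0 < s → s < B → |x| ≤ s * c) :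
    x = 0 := by
  by_contra hx
  have hx' : 0 < |x| := abs_pos.2 hx
  rcases le_or_gt c 0 with hc | hc
  · have := h (B / 2) (by linarith) (by linarith)
    nlinarith
  · have hs1 : 0 < min (B / 2) (|x| / (2 * c)) := lt_min (by linarith) (by positivity)
    have hs2 : min (B / 2) (|x| / (2 * c)) < B := lt_of_le_of_lt (min_le_left _ _) (by linarith)
    have key := h _ hs1 hs2
    have h3 : min (B / 2) (|x| / (2 * c)) * c ≤ (|x| / (2 * c)) * c :=
      mul_le_mul_of_nonneg_right (min_le_right _ _) hc.le
    have h4 : (|x| / (2 * c)) * c = |x| / 2 := by field_simp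
    nlinarith

lemma lasso_kkt (a b c lam : ℝ) (hc : 0 ≤ c) (hlam : 0 < lam)
    (h : ∀ t : ℝ, 0 ≤ -(t * a) + t ^ 2 / 2 * c + lam * (|b + t| - |b|)) :
    |a| ≤ lam ∧ a * b = lam * |b| := by
  have habs : ∀ t : ℝ, |b + t| - |b| ≤ |t| := by
    intro t
    have := abs_sub_abs_le_abs_sub (b + t) b
    simpa using this
  have hub : ∀ s : ℝ, 0 < s → a ≤ lam + s * (c / 2) := by
    intro s hs
    have h1 := h s
    have h3 : lam * (|b + s| - |b|) ≤ lam * s := by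
      apply le_trans (mul_le_mul_of_nonneg_left (habs s) hlam.le); simp [abs_of_pos hs]
    have h4 : s * a ≤ s * (lam + s * (c / 2)) := by nlinarith
    have := (mul_le_mul_iff_right₀ hs).mp h4
    linarith
  have hlb : ∀ s : ℝ, 0 < s → -a ≤ lam + s * (c / 2) := by
    intro s hs
    have h1 := h (-s)
    have h3 : lam * (|b + -s| - |b|) ≤ lam * s := by
      apply le_trans (mul_le_mul_of_nonneg_left (habs (-s)) hlam.le); simp [abs_of_pos hs]
    have h4 : s * (-a) ≤ s * (lam + s * (c / 2)) := by nlinarith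
    have := (mul_le_mul_iff_right₀ hs).mp h4
    linarith
  have hA : |a| ≤ lam := by
    rw [abs_le]
    exact ⟨by have := lasso_aux_le (-a) lam (c / 2) (by linarith) hlb; linarith,
      lasso_aux_le a lam (c / 2) (by linarith) hub⟩
  refine ⟨hA, ?_⟩
  rcases eq_or_ne b 0 with hb | hb
  · simp [hb]
  · have hb' : 0 < |b| := abs_pos.2 hb
    set sgn : ℝ := if 0 < b then 1 else -1 with hsgn
    have hsgn2 : sgn ^ 2 = 1 := by
      rcases lt_or_ge 0 b with h0 | h0
      · simp [hsgn, h0]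
      · rw [hsgn, if_neg (not_lt.2 h0)]; norm_num
    have hsb : b = sgn * |b| := by
      rcases lt_trichotomy b 0 with h0 | h0 | h0
      · rw [hsgn, if_neg (not_lt.2 h0.le), abs_of_neg h0]; ring
      · exact absurd h0 hb
      · rw [hsgn, if_pos h0, abs_of_pos h0]; ring
    have hplus : ∀ s : ℝ, 0 < s → s < |b| → |b + sgn * s| = |b| + s := by
      intro s hs hsB
      rcases lt_trichotomy b 0 with h0 | h0 | h0
      · rw [hsgn, if_neg (not_lt.2 h0.le)]
        rw [abs_of_neg h0] at hsB ⊢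
        rw [abs_of_neg (by linarith)]; ring
      · exact absurd h0 hb
      · rw [hsgn, if_pos h0]
        rw [abs_of_pos h0] at hsB ⊢
        rw [abs_of_pos (by linarith)]; ring
    have hminus : ∀ s : ℝ, 0 < s → s < |b| → |b + -(sgn * s)| = |b| - s := by
      intro s hs hsB
      rcases lt_trichotomy b 0 with h0 | h0 | h0
      · rw [hsgn, if_neg (not_lt.2 h0.le)]
        rw [abs_of_neg h0] at hsB ⊢
        rw [abs_of_neg (by linarith)]; ring
      · exact absurd h0 hb
      · rw [hsgn, if_pos h0]
        rw [abs_of_pos h0] at hsB ⊢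
        rw [abs_of_pos (by linarith)]; ring
    have hkey : sgn * a - lam = 0 := by
      apply lasso_aux_eq _ |b| (c / 2) hb'
      intro s hs hsB
      have hp := h (sgn * s)
      rw [hplus s hs hsB, mul_pow, hsgn2, one_mul] at hp
      have hm := h (-(sgn * s))
      rw [hminus s hs hsB, neg_sq, mul_pow, hsgn2, one_mul] at hm
      rw [abs_le]
      constructor
      · have h4 : s * (lam - sgn * a) ≤ s * (s * (c / 2)) := by nlinarith
        have := (mul_le_mul_iff_right₀ hs).mp h4
        linarith
      · have h4 : s * (sgn * a - lam) ≤ s * (s * (c / 2)) := by nlinarith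
        have := (mul_le_mul_iff_right₀ hs).mp h4
        linarith
    have hsa : sgn * a = lam := by linarith
    have h2 : a * b = sgn * a * |b| := by nth_rw 1 [hsb]; ring
    rw [h2, hsa]


lemma lasso_sq_expand {ι : Type*} [Fintype ι] (r u : ι → ℝ) (t : ℝ) :
    ∑ i, (r i - t * u i)^2 =
      ∑ i, (r i)^2 - 2*t*(∑ i, u i * r i) + t^2 * ∑ i, (u i)^2 := by
  rw [Finset.mul_sum, Finset.mul_sum, ← Finset.sum_sub_distrib, ← Finset.sum_add_distrib]
  apply Finset.sum_congr rfl
  intros; ring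

lemma lasso_exists_min {ι : Type*} [Fintype ι] (g : (ι → ℝ) → ℝ) (hg : Continuous g)
    (lam : ℝ) (hlam : 0 < lam) (hco : ∀ u, lam * ‖u‖ ≤ g u) : ∃ u0, ∀ u, g u0 ≤ g u := by
  apply hg.exists_forall_le
  exact tendsto_atTop_mono hco (tendsto_norm_cocompact_atTop.const_mul_atTop hlam)


set_option maxHeartbeats 1000000 in
/-- (Support containment for the LASSO primal–dual witness; Proposition 1, part 1.) -/
theorem stmt_0 (m N : ℕ) (U : Matrix (Fin m) (Fin N) ℝ)
    (S : Finset (Fin N))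
    (γs : Fin N → ℝ) (hγs : ∀ j ∉ S, γs j = 0)
    (ε : Fin N → ℝ)
    (lam : ℝ) (hlam : 0 < lam)
    (US : Matrix (Fin m) {j // j ∈ S} ℝ) (hUS : US = Matrix.of fun i j => U i j.1)
    (G : Matrix {j // j ∈ S} {j // j ∈ S} ℝ) (hG : G = USᵀ * US)
    (hGinv : IsUnit G.det)
    (PiS : Matrix (Fin m) (Fin m) ℝ) (hPiS : PiS = US * G⁻¹ * USᵀ)
    (y : Fin m → ℝ) (hy : y = U *ᵥ (γs + ε))
    (hdual : ∀ v : {j // j ∈ S} → ℝ, (∀ i, |v i| ≤ 1) →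
      ∀ j ∉ S, |lam * ((fun i => U i j) ⬝ᵥ (US *ᵥ (G⁻¹ *ᵥ v))) +
        (fun i => U i j) ⬝ᵥ ((1 - PiS) *ᵥ (U *ᵥ ε))| < lam) :
    ∀ γhat : Fin N → ℝ,
      (∀ γ : Fin N → ℝ,
        (1/2) * ∑ i, (y i - (U *ᵥ γhat) i)^2 + lam * ∑ j, |γhat j| ≤
        (1/2) * ∑ i, (y i - (U *ᵥ γ) i)^2 + lam * ∑ j, |γ j|) →
      ∀ j ∉ S, γhat j = 0 := by
  classical
  intro γhat hmin j0 hj0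
  set f : (Fin N → ℝ) → ℝ :=
    fun γ => (1/2) * ∑ i, (y i - (U *ᵥ γ) i)^2 + lam * ∑ j, |γ j| with hf
  set ext : ({k // k ∈ S} → ℝ) → Fin N → ℝ :=
    fun u k => if h : k ∈ S then u ⟨k, h⟩ else 0 with hext
  -- Step 1: existence of a restricted minimizer
  obtain ⟨u0, hu0⟩ : ∃ u0, ∀ u, f (ext u0) ≤ f (ext u) := by
    have hfc : Continuous f := by
      rw [hf]
      apply Continuous.add
      · apply Continuous.mul continuous_const
        apply continuous_finset_sum
        intro i _
        have : Continuous fun γ : Fin N → ℝ => y i - ∑ k, U i k * γ k :=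
          continuous_const.sub (continuous_finset_sum _ fun k _ =>
            continuous_const.mul (continuous_apply k))
        exact this.pow 2
      · apply Continuous.mul continuous_const
        exact continuous_finset_sum _ fun k _ => (continuous_apply k).abs
    have hextc : Continuous ext := by
      rw [hext]
      apply continuous_pi
      intro k
      by_cases h : k ∈ S
      · simp only [dif_pos h]
        exact continuous_apply _
      · simp only [dif_neg h]
        exact continuous_const
    apply lasso_exists_min _ (hfc.comp hextc) lam hlam
    intro u
    have hC : (0:ℝ) ≤ ∑ k, |ext u k| := Finset.sum_nonneg fun k _ => abs_nonneg _
    have h1 : ‖u‖ ≤ ∑ k, |ext u k| := by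
      rw [pi_norm_le_iff_of_nonneg hC]
      intro i
      have h2 := Finset.single_le_sum (f := fun k => |ext u k|)
        (fun k _ => abs_nonneg _) (Finset.mem_univ i.1)
      have h3 : ext u i.1 = u i := by simp [hext, i.2]
      rw [Real.norm_eq_abs, ← h3]
      exact h2
    have h2 : lam * ‖u‖ ≤ lam * ∑ k, |ext u k| := mul_le_mul_of_nonneg_left h1 hlam.le
    have h3 : 0 ≤ (1/2) * ∑ i, (y i - (U *ᵥ ext u) i)^2 := by positivity
    calc lam * ‖u‖ ≤ lam * ∑ k, |ext u k| := h2
      _ ≤ f (ext u) := by rw [hf]; dsimp only; linarith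
  set γt : Fin N → ℝ := ext u0 with hγt
  set r : Fin m → ℝ := fun i => y i - (U *ᵥ γt) i with hr
  set a : Fin N → ℝ := fun k => ∑ i, U i k * r i with ha
  have hγtS : ∀ k ∉ S, γt k = 0 := by
    intro k hk; simp [hγt, hext, hk]
  -- Step 3: KKT conditions on S
  have hKKT : ∀ k ∈ S, |a k| ≤ lam ∧ a k * γt k = lam * |γt k| := by
    intro k hk
    have hc : (0:ℝ) ≤ ∑ i, (U i k)^2 := Finset.sum_nonneg fun i _ => sq_nonneg _
    apply lasso_kkt _ _ _ _ hc hlam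
    intro t
    set pert : Fin N → ℝ := fun j => γt j + if j = k then t else 0 with hpert
    have hextp : pert = ext (fun i => u0 i + if i = ⟨k, hk⟩ then t else 0) := by
      funext j
      by_cases h : j ∈ S
      · simp only [hpert, hγt, hext, dif_pos h]
        congr 1
        by_cases hjk : j = k
        · subst hjk; simp
        · rw [if_neg hjk, if_neg (by simp [Subtype.ext_iff, hjk])]
      · have hne : j ≠ k := fun hjk => h (hjk ▸ hk)
        simp [hpert, hγt, hext, dif_neg h, hne]
    have hge : f γt ≤ f pert := by
      have h0 := hu0 (fun i => u0 i + if i = ⟨k, hk⟩ then t else 0)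
      rwa [← hextp] at h0
    have hmv : ∀ i, y i - (U *ᵥ pert) i = r i - t * U i k := by
      intro i
      have h1 : (U *ᵥ pert) i = (U *ᵥ γt) i + t * U i k := by
        show ∑ j, U i j * pert j = (∑ j, U i j * γt j) + t * U i k
        simp only [hpert, mul_add, Finset.sum_add_distrib]
        congr 1
        rw [Finset.sum_congr rfl (fun j _ => show U i j * (if j = k then t else 0)
          = if j = k then U i k * t else 0 by by_cases hjk : j = k <;> simp [hjk])]
        rw [Finset.sum_ite_eq' Finset.univ k (fun _ => U i k * t)]
        simp [mul_comm]
      rw [hr]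
      dsimp only
      rw [h1]
      ring
    have hq : ∑ i, (y i - (U *ᵥ pert) i)^2 =
        ∑ i, (r i)^2 - 2*t*(∑ i, U i k * r i) + t^2 * ∑ i, (U i k)^2 := by
      rw [← lasso_sq_expand r (fun i => U i k) t]
      exact Finset.sum_congr rfl fun i _ => by rw [hmv i]
    have hl1 : ∑ j, |pert j| = (∑ j, |γt j|) - |γt k| + |γt k + t| := by
      rw [← Finset.add_sum_erase _ (fun j => |pert j|) (Finset.mem_univ k),
        ← Finset.add_sum_erase _ (fun j => |γt j|) (Finset.mem_univ k)]
      have heq1 : ∀ j ∈ Finset.univ.erase k, |pert j| = |γt j| := by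
        intro j hj
        rw [hpert]
        simp [Finset.ne_of_mem_erase hj]
      rw [Finset.sum_congr rfl heq1]
      have heq2 : |pert k| = |γt k + t| := by rw [hpert]; simp
      rw [heq2]
      ring
    have hfp : f pert = (1/2) * (∑ i, (r i)^2 - 2*t*(∑ i, U i k * r i)
        + t^2 * ∑ i, (U i k)^2) + lam * ((∑ j, |γt j|) - |γt k| + |γt k + t|) := by
      rw [hf]
      dsimp only
      rw [hq, hl1]
    have hfγt : f γt = (1/2) * ∑ i, (r i)^2 + lam * ∑ j, |γt j| := rfl
    have hak : a k = ∑ i, U i k * r i := rfl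
    rw [hfp, hfγt] at hge
    rw [hak]
    nlinarith [hge]
  -- Step 4: dual bound off S
  have hLT : ∀ k ∉ S, |a k| < lam := by
    intro k hk
    set w : Fin m → ℝ := U *ᵥ ε with hw
    set z : {j // j ∈ S} → ℝ := fun i => a i.1 / lam with hz
    have hz1 : ∀ i, |z i| ≤ 1 := by
      intro i
      rw [hz]
      dsimp only
      rw [abs_div, abs_of_pos hlam, div_le_one hlam]
      exact (hKKT i.1 i.2).1
    set d : {j // j ∈ S} → ℝ := fun i => γs i.1 - u0 i with hd
    -- generic reindexing lemma
    have hUgen : ∀ (v : Fin N → ℝ), (∀ j ∉ S, v j = 0) →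
        ∀ i, (U *ᵥ v) i = (US *ᵥ fun p : {j // j ∈ S} => v p.1) i := by
      intro v hv i
      show ∑ j, U i j * v j = ∑ p : {j // j ∈ S}, US i p * v p.1
      rw [hUS]
      rw [show (∑ p : {j // j ∈ S}, (Matrix.of fun i (j : {j // j ∈ S}) => U i j.1) i p * v p.1)
        = ∑ j ∈ S, U i j * v j from Finset.sum_coe_sort S (fun j => U i j * v j)]
      symm
      apply Finset.sum_subset (Finset.subset_univ S)
      intro j _ hj
      rw [hv j hj, mul_zero]
    have hu0γt : (fun p : {j // j ∈ S} => γt p.1) = u0 := by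
      funext p
      simp [hγt, hext, p.2]
    have hrd : r = US *ᵥ d + w := by
      funext i
      have h1 : y i = (U *ᵥ γs) i + w i := by
        rw [hy, hw, Matrix.mulVec_add]
        rfl
      have h2 := hUgen γs hγs i
      have h3 := hUgen γt hγtS i
      rw [hu0γt] at h3
      have h5 : (US *ᵥ d) i = (US *ᵥ fun p : {j // j ∈ S} => γs p.1) i - (US *ᵥ u0) i := by
        show ∑ p, US i p * d p = (∑ p, US i p * γs p.1) - ∑ p, US i p * u0 p
        rw [← Finset.sum_sub_distrib]
        apply Finset.sum_congr rfl
        intro p _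
        rw [hd]
        ring
      show y i - (U *ᵥ γt) i = (US *ᵥ d) i + w i
      rw [h1, h2, h3, h5]
      ring
    have hUSd : US *ᵥ d = r - w := by rw [hrd]; abel
    have hUSr : USᵀ *ᵥ r = fun i : {j // j ∈ S} => a i.1 := by
      funext i
      show ∑ p, USᵀ i p * r p = a i.1
      rw [ha]
      apply Finset.sum_congr rfl
      intro p _
      rw [Matrix.transpose_apply, hUS]
      rfl
    have hlamz : (fun i : {j // j ∈ S} => a i.1) = lam • z := by
      funext i
      simp only [hz, Pi.smul_apply, smul_eq_mul]
      field_simp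
    have hGd : G *ᵥ d = lam • z - USᵀ *ᵥ w := by
      rw [hG, ← Matrix.mulVec_mulVec, hUSd, Matrix.mulVec_sub, hUSr, hlamz]
    have hdval : d = G⁻¹ *ᵥ (lam • z - USᵀ *ᵥ w) := by
      rw [← hGd, Matrix.mulVec_mulVec, Matrix.nonsing_inv_mul G hGinv, Matrix.one_mulVec]
    have hPw : (1 - PiS) *ᵥ w = w - US *ᵥ (G⁻¹ *ᵥ (USᵀ *ᵥ w)) := by
      rw [Matrix.sub_mulVec, Matrix.one_mulVec, hPiS, ← Matrix.mulVec_mulVec,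
        ← Matrix.mulVec_mulVec]
    have hsmul : US *ᵥ (G⁻¹ *ᵥ (lam • z)) = lam • (US *ᵥ (G⁻¹ *ᵥ z)) := by
      rw [Matrix.mulVec_smul, Matrix.mulVec_smul]
    have hak : a k = lam * ((fun i => U i k) ⬝ᵥ (US *ᵥ (G⁻¹ *ᵥ z))) +
        (fun i => U i k) ⬝ᵥ ((1 - PiS) *ᵥ w) := by
      have h6 : a k = (fun i => U i k) ⬝ᵥ r := rfl
      rw [h6, hrd, hdval]
      rw [show G⁻¹ *ᵥ (lam • z - USᵀ *ᵥ w) = G⁻¹ *ᵥ (lam • z) - G⁻¹ *ᵥ (USᵀ *ᵥ w) from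
        Matrix.mulVec_sub _ _ _]
      rw [Matrix.mulVec_sub, hsmul, hPw]
      rw [dotProduct_add, dotProduct_sub, dotProduct_sub, dotProduct_smul]
      rw [smul_eq_mul]
      ring
    rw [hak]
    exact hdual z hz1 k hk
  have hle : ∀ k, |a k| ≤ lam := by
    intro k
    by_cases hk : k ∈ S
    · exact (hKKT k hk).1
    · exact (hLT k hk).le
  have heq : ∀ k, a k * γt k = lam * |γt k| := by
    intro k
    by_cases hk : k ∈ S
    · exact (hKKT k hk).2
    · simp [hγtS k hk]
  -- Step 5: the expansion identity
  set B : Fin N → ℝ :=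
    fun k => lam * |γhat k| - lam * |γt k| - (γhat k - γt k) * a k with hB
  have hident : f γhat = f γt +
      (1/2) * ∑ i, ((U *ᵥ γhat) i - (U *ᵥ γt) i)^2 + ∑ k, B k := by
    set v : Fin m → ℝ := fun i => (U *ᵥ γhat) i - (U *ᵥ γt) i with hv
    have hq : ∑ i, (y i - (U *ᵥ γhat) i)^2 =
        ∑ i, (r i)^2 - 2*1*(∑ i, v i * r i) + 1^2 * ∑ i, (v i)^2 := by
      rw [← lasso_sq_expand r v 1]
      apply Finset.sum_congr rfl
      intro i _
      congr 1
      rw [hv, hr]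
      ring
    have hswap : ∑ i, v i * r i = ∑ k, (γhat k - γt k) * a k := by
      have hv2 : ∀ i, v i = ∑ k, U i k * (γhat k - γt k) := by
        intro i
        rw [hv]
        show (∑ k, U i k * γhat k) - (∑ k, U i k * γt k) = _
        rw [← Finset.sum_sub_distrib]
        apply Finset.sum_congr rfl
        intros; ring
      calc ∑ i, v i * r i = ∑ i, ∑ k, U i k * (γhat k - γt k) * r i := by
            apply Finset.sum_congr rfl
            intro i _
            rw [hv2 i, Finset.sum_mul]
        _ = ∑ k, ∑ i, U i k * (γhat k - γt k) * r i := Finset.sum_comm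
        _ = ∑ k, (γhat k - γt k) * a k := by
            apply Finset.sum_congr rfl
            intro k _
            rw [ha]
            dsimp only
            rw [Finset.mul_sum]
            apply Finset.sum_congr rfl
            intros; ring
    have hfγt : f γt = (1/2) * ∑ i, (r i)^2 + lam * ∑ k, |γt k| := rfl
    have hfγhat : f γhat = (1/2) * (∑ i, (r i)^2 - 2*1*(∑ k, (γhat k - γt k) * a k)
        + 1^2 * ∑ i, (v i)^2) + lam * ∑ k, |γhat k| := by
      rw [hf]
      dsimp only
      rw [hq, hswap]
    have hsB : ∑ k, B k = lam * ∑ k, |γhat k| - lam * ∑ k, |γt k|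
        - ∑ k, (γhat k - γt k) * a k := by
      simp only [hB, Finset.sum_sub_distrib, Finset.mul_sum]
    rw [hfγhat, hfγt, hsB]
    ring
  have hBnn : ∀ k ∈ Finset.univ, 0 ≤ B k := by
    intro k _
    have h1 : γhat k * a k ≤ lam * |γhat k| := by
      calc γhat k * a k ≤ |γhat k * a k| := le_abs_self _
        _ = |γhat k| * |a k| := abs_mul _ _
        _ ≤ |γhat k| * lam := mul_le_mul_of_nonneg_left (hle k) (abs_nonneg _)
        _ = lam * |γhat k| := mul_comm _ _
    have h2 := heq k
    simp only [hB]
    nlinarith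
  have hsum0 : ∑ k, B k = 0 := by
    have h1 : f γhat ≤ f γt := hmin γt
    have h2 : 0 ≤ (1/2) * ∑ i, ((U *ᵥ γhat) i - (U *ᵥ γt) i)^2 := by positivity
    have h3 : 0 ≤ ∑ k, B k := Finset.sum_nonneg hBnn
    rw [hident] at h1
    linarith
  have hB0 : B j0 = 0 :=
    (Finset.sum_eq_zero_iff_of_nonneg hBnn).mp hsum0 j0 (Finset.mem_univ _)
  -- conclude
  by_contra hne
  have hpos : 0 < |γhat j0| := abs_pos.2 hne
  have h1 : γhat j0 * a j0 ≤ |γhat j0| * |a j0| := by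
    calc γhat j0 * a j0 ≤ |γhat j0 * a j0| := le_abs_self _
      _ = |γhat j0| * |a j0| := abs_mul _ _
  have h2 : |γhat j0| * |a j0| < |γhat j0| * lam :=
    mul_lt_mul_of_pos_left (hLT j0 hj0) hpos
  have h3 : γt j0 = 0 := hγtS j0 hj0
  simp only [hB, h3, abs_zero, sub_zero, mul_zero] at hB0
  linarith
end

section
/- (Uniqueness of the LASSO solution under strict dual feasibility; Proposition 1, part 2.) Let S ⊆ {1,…,N}, let γ* ∈ ℝ^N satisfy γ*_j = 0 for every j ∉ S, let ε ∈ ℝ^N, and set y := Ũ(γ* + ε) ∈ ℝ^m. Assume G := Ũ_SᵀŨ_S is invertible, λ > 0, and that for every v ∈ ℝ^S with ‖v‖_∞ ≤ 1 and every j ∉ S, |λ·(Ũ_jᵀ Ũ_S G⁻¹ v) + Ũ_jᵀ (I_m − Π_S) Ũ ε| < λ. Then f_{y,λ} has exactly one global minimizer on ℝ^N. -/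
open Matrix BigOperators

lemma lasso_exists_min_s1 {ι : Type*} [Fintype ι] {m : ℕ} (A : Matrix (Fin m) ι ℝ)
    (y : Fin m → ℝ) (lam : ℝ) (hlam : 0 < lam) :
    ∃ β : ι → ℝ, ∀ β' : ι → ℝ,
      (1/2) * ∑ i, (y i - (A *ᵥ β) i)^2 + lam * ∑ j, |β j| ≤
      (1/2) * ∑ i, (y i - (A *ᵥ β') i)^2 + lam * ∑ j, |β' j| := by
  set F : (ι → ℝ) → ℝ := fun β =>
    (1/2) * ∑ i, (y i - (A *ᵥ β) i)^2 + lam * ∑ j, |β j| with hF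
  have hq : ∀ β : ι → ℝ, 0 ≤ (1/2) * ∑ i, (y i - (A *ᵥ β) i)^2 := by
    intro β
    have : (0:ℝ) ≤ ∑ i, (y i - (A *ᵥ β) i)^2 :=
      Finset.sum_nonneg fun i _ => sq_nonneg _
    linarith
  have habs : ∀ β : ι → ℝ, 0 ≤ ∑ j, |β j| :=
    fun β => Finset.sum_nonneg fun j _ => abs_nonneg _
  have hcont : Continuous F := by
    apply Continuous.add
    · apply Continuous.mul continuous_const
      apply continuous_finset_sum
      intro i _
      apply Continuous.pow
      apply Continuous.sub continuous_const
      exact continuous_finset_sum _ fun j _ =>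
        (continuous_const.mul (continuous_apply j))
    · exact continuous_const.mul
        (continuous_finset_sum _ fun j _ => (continuous_apply j).abs)
  set R : ℝ := F 0 / lam with hR
  have hF0 : 0 ≤ F 0 := by
    have := hq 0; have := habs (0 : ι → ℝ); simp only [hF]; positivity
  have hR0 : 0 ≤ R := div_nonneg hF0 hlam.le
  set K : Set (ι → ℝ) := Set.pi Set.univ fun _ => Set.Icc (-R) R with hK
  have hKc : IsCompact K := isCompact_univ_pi fun _ => isCompact_Icc
  have h0K : (0 : ι → ℝ) ∈ K := by
    intro j _; exact ⟨neg_nonpos_of_nonneg hR0, hR0⟩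
  obtain ⟨β, hβK, hmin⟩ := hKc.exists_isMinOn ⟨0, h0K⟩ hcont.continuousOn
  refine ⟨β, fun β' => ?_⟩
  by_cases hβ' : β' ∈ K
  · exact hmin hβ'
  · have hβ0 : F β ≤ F 0 := hmin h0K
    have : ∃ j, R < |β' j| := by
      by_contra h
      push_neg at h
      exact hβ' fun j _ => abs_le.mp (h j)
    obtain ⟨j, hj⟩ := this
    have h1 : lam * |β' j| ≤ F β' := by
      have h2 : |β' j| ≤ ∑ k, |β' k| :=
        Finset.single_le_sum (f := fun k => |β' k|) (fun k _ => abs_nonneg _)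
          (Finset.mem_univ j)
      have := hq β'
      have := mul_le_mul_of_nonneg_left h2 hlam.le
      simp only [hF]; nlinarith
    have h3 : F 0 < lam * |β' j| := by
      have : F 0 = lam * R := by rw [hR]; field_simp
      rw [this]
      exact mul_lt_mul_of_pos_left hj hlam
    show F β ≤ F β'
    linarith

lemma kkt_aux {a b lam x : ℝ} (ha : 0 ≤ a) (hlam : 0 < lam)
    (h : ∀ t : ℝ, 0 ≤ -(t*b) + t^2*a/2 + lam*(|x+t| - |x|)) :
    |b| ≤ lam ∧ b*x = lam*|x| := by
  constructor
  · rcases eq_or_ne b 0 with hb | hb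
    · simp [hb]; exact hlam.le
    · refine le_of_forall_pos_le_add fun ε hε => ?_
      set u : ℝ := 2*ε/(a+1) with hu
      have hu0 : 0 < u := by positivity
      set t : ℝ := u * (b/|b|) with ht
      have hbb : abs (b / abs b) = 1 := by
        rw [abs_div, abs_abs, div_self (abs_ne_zero.mpr hb)]
      have htabs : |t| = u := by
        rw [ht, abs_mul, hbb, mul_one, abs_of_pos hu0]
      have htb : t * b = u * |b| := by
        have hd : (b*b)/|b| = |b| := by
          rw [← abs_mul_abs_self b, mul_div_assoc, div_self (abs_ne_zero.mpr hb),
            mul_one]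
        calc t*b = u * ((b*b)/|b|) := by rw [ht]; ring
        _ = u * |b| := by rw [hd]
      have h1 := h t
      have h2 : |x+t| - |x| ≤ |t| := by
        have := abs_sub_abs_le_abs_sub (x+t) x
        simpa using this
      have h3 : t^2 = u^2 := by
        rw [← sq_abs, htabs]
      have h4 : u * |b| ≤ u^2*a/2 + lam*u := by
        rw [← htb, ← h3]
        nlinarith [mul_le_mul_of_nonneg_left h2 hlam.le]
      have h5 : |b| ≤ u*a/2 + lam := by
        by_contra hc
        push_neg at hc
        nlinarith
      have h6 : u*a/2 ≤ ε := by
        have huu : u*(a+1) = 2*ε := by rw [hu]; exact div_mul_cancel₀ _ (ne_of_gt (by linarith : (0:ℝ) < a+1))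
        nlinarith
      linarith
  · rcases eq_or_ne x 0 with hx | hx
    · simp [hx]
    · set e : ℝ := lam * (x/|x|) - b with he
      have hx0 : 0 < |x| := abs_pos.mpr hx
      have key : ∀ t : ℝ, |t| < |x| → |x+t| = |x| + t*(x/|x|) := by
        intro t ht
        rcases lt_or_gt_of_ne hx with hneg | hpos
        · have hax : |x| = -x := abs_of_neg hneg
          have h1 : x + t < 0 := by
            rw [hax] at ht
            cases abs_lt.mp ht; linarith
          rw [abs_of_neg h1, hax]
          field_simp
          try ring
        · have hax : |x| = x := abs_of_pos hpos
          have h1 : 0 < x + t := by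
            rw [hax] at ht
            cases abs_lt.mp ht; linarith
          rw [abs_of_pos h1, hax]
          field_simp
          try ring
      have he0 : e = 0 := by
        by_contra hee
        have he0 : 0 < |e| := abs_pos.mpr hee
        set c : ℝ := min (|x|/(2*|e|)) (1/(a+1)) with hc
        have hc0 : 0 < c := lt_min (by positivity) (by positivity)
        set t : ℝ := -c * e with ht
        have htx : |t| < |x| := by
          have : |t| = c * |e| := by
            rw [ht, abs_mul, abs_neg, abs_of_pos hc0]
          rw [this]
          have h1 : c ≤ |x|/(2*|e|) := min_le_left _ _
          have h2 : c * |e| ≤ |x|/2 := by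
            rw [le_div_iff₀ (by positivity : (0:ℝ) < 2*|e|)] at h1
            nlinarith
          linarith
        have h1 := h t
        rw [key t htx] at h1
        have h2 : -(t*b) + lam*(|x| + t*(x/|x|) - |x|) = t*e := by
          rw [ht, he]; ring
        have h3 : 0 ≤ t*e + t^2*a/2 := by linarith [h1]
        have h4 : t*e = -(c*e^2) := by rw [ht]; ring
        have h5 : t^2 = c^2*e^2 := by rw [ht]; ring
        rw [h4, h5] at h3
        have hca : c * a ≤ a/(a+1) := by
          have h6 : c ≤ 1/(a+1) := min_le_right _ _
          calc c * a ≤ (1/(a+1)) * a := mul_le_mul_of_nonneg_right h6 ha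
          _ = a/(a+1) := by ring
        have hca1 : c * a < 2 := by
          have : a/(a+1) < 2 := by
            rw [div_lt_iff₀ (by positivity : (0:ℝ) < a+1)]; linarith
          linarith
        have he2 : 0 < e^2 := by positivity
        clear_value e c t
        have hid : c^2*e^2*a = (c*e^2)*(c*a) := by ring
        have hprod := mul_lt_mul_of_pos_left hca1 (mul_pos hc0 he2)
        nlinarith [hid, hprod, mul_pos hc0 he2]
      have hb : b = lam * (x/|x|) := by
        have : lam * (x/|x|) - b = 0 := he0
        linarith
      rw [hb]
      have : x * x = |x| * |x| := (abs_mul_abs_self x).symm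
      field_simp
      nlinarith

lemma sum_support_subtype {N : ℕ} (S : Finset (Fin N)) (f : Fin N → ℝ)
    (hf : ∀ j ∉ S, f j = 0) : ∑ j, f j = ∑ j : {j // j ∈ S}, f j.1 := by
  rw [Finset.sum_coe_sort S f]
  exact (Finset.sum_subset (Finset.subset_univ S) fun x _ hx => hf x hx).symm

lemma mulVec_support_subtype {m N : ℕ} (U : Matrix (Fin m) (Fin N) ℝ)
    (S : Finset (Fin N)) (g : Fin N → ℝ) (hg : ∀ j ∉ S, g j = 0) :
    U *ᵥ g = (Matrix.of fun i (j : {j // j ∈ S}) => U i j.1) *ᵥ (fun j => g j.1) := by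
  funext i
  simp only [Matrix.mulVec, dotProduct, Matrix.of_apply]
  exact sum_support_subtype S (fun j => U i j * g j)
    (fun j hj => by simp [hg j hj])

/-- (Uniqueness of the LASSO solution under strict dual feasibility; Proposition 1, part 2.) -/
theorem stmt_1 (m N : ℕ) (U : Matrix (Fin m) (Fin N) ℝ)
    (S : Finset (Fin N))
    (γs : Fin N → ℝ) (hγs : ∀ j ∉ S, γs j = 0)
    (ε : Fin N → ℝ)
    (lam : ℝ) (hlam : 0 < lam)
    (US : Matrix (Fin m) {j // j ∈ S} ℝ) (hUS : US = Matrix.of fun i j => U i j.1)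
    (G : Matrix {j // j ∈ S} {j // j ∈ S} ℝ) (hG : G = USᵀ * US)
    (hGinv : IsUnit G.det)
    (PiS : Matrix (Fin m) (Fin m) ℝ) (hPiS : PiS = US * G⁻¹ * USᵀ)
    (y : Fin m → ℝ) (hy : y = U *ᵥ (γs + ε))
    (hdual : ∀ v : {j // j ∈ S} → ℝ, (∀ i, |v i| ≤ 1) →
      ∀ j ∉ S, |lam * ((fun i => U i j) ⬝ᵥ (US *ᵥ (G⁻¹ *ᵥ v))) +
        (fun i => U i j) ⬝ᵥ ((1 - PiS) *ᵥ (U *ᵥ ε))| < lam) :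
    ∃! γhat : Fin N → ℝ,
      ∀ γ : Fin N → ℝ,
        (1/2) * ∑ i, (y i - (U *ᵥ γhat) i)^2 + lam * ∑ j, |γhat j| ≤
        (1/2) * ∑ i, (y i - (U *ᵥ γ) i)^2 + lam * ∑ j, |γ j| := by
  have hUSapp : ∀ (i : Fin m) (j : {j // j ∈ S}), US i j = U i j.1 := by
    intro i j; rw [hUS]; rfl
  have hrestrict : ∀ g : Fin N → ℝ, (∀ j ∉ S, g j = 0) →
      U *ᵥ g = US *ᵥ (fun j => g j.1) := by
    intro g hg
    rw [mulVec_support_subtype U S g hg, ← hUS]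
  -- injectivity of US
  have hinj : ∀ v : {j // j ∈ S} → ℝ, US *ᵥ v = 0 → v = 0 := by
    intro v hv
    have h1 : G *ᵥ v = 0 := by
      rw [hG, ← Matrix.mulVec_mulVec, hv, Matrix.mulVec_zero]
    have h2 : v = (G⁻¹ * G) *ᵥ v := by
      rw [Matrix.nonsing_inv_mul G hGinv, Matrix.one_mulVec]
    rw [h2, ← Matrix.mulVec_mulVec, h1, Matrix.mulVec_zero]
  -- restricted minimizer
  obtain ⟨β, hβ⟩ := lasso_exists_min_s1 US y lam hlam
  set r : Fin m → ℝ := y - US *ᵥ β with hr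
  set c : Fin N → ℝ := fun j => ∑ i, U i j * r i with hc
  -- KKT conditions on S
  have hkkt : ∀ j0 : {j // j ∈ S}, |c j0.1| ≤ lam ∧ c j0.1 * β j0 = lam * |β j0| := by
    intro j0
    have hbcol : c j0.1 = ∑ i, US i j0 * r i := by
      simp only [hc, hUSapp]
    rw [hbcol]
    apply kkt_aux (a := ∑ i, (US i j0)^2)
      (Finset.sum_nonneg fun i _ => sq_nonneg _) hlam
    intro t
    set p : {j // j ∈ S} → ℝ := β + Pi.single j0 t with hp
    have hpert := hβ p
    have hmv : US *ᵥ p = US *ᵥ β + fun i => US i j0 * t := by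
      rw [hp, Matrix.mulVec_add, Matrix.mulVec_single]; rfl
    have hqi : ∀ i, (y i - (US *ᵥ p) i)^2
        = (y i - (US *ᵥ β) i)^2 - 2*t*(US i j0 * r i) + t^2*(US i j0)^2 := by
      intro i
      rw [hmv]
      simp only [Pi.add_apply]
      have hri : y i - (US *ᵥ β) i = r i := rfl
      rw [sub_add_eq_sub_sub, hri]
      ring
    have hqsum : ∑ i, (y i - (US *ᵥ p) i)^2
        = ∑ i, (y i - (US *ᵥ β) i)^2 - 2*t*(∑ i, US i j0 * r i)
          + t^2*(∑ i, (US i j0)^2) := by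
      rw [Finset.mul_sum, Finset.mul_sum, ← Finset.sum_sub_distrib,
        ← Finset.sum_add_distrib]
      exact Finset.sum_congr rfl fun i _ => hqi i
    have habssum : ∑ k, |p k| = ∑ k, |β k| - |β j0| + |β j0 + t| := by
      have hv : ∀ k, p k = if k = j0 then β j0 + t else β k := by
        intro k
        by_cases hk : k = j0
        · subst hk; simp [hp]
        · simp [hp, hk, Pi.single_eq_of_ne hk]
      have e1 : ∑ k, |p k|
          = |β j0 + t| + ∑ k ∈ Finset.univ.erase j0, |β k| := by
        rw [← Finset.add_sum_erase _ _ (Finset.mem_univ j0)]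
        congr 1
        · rw [hv j0]; simp
        · exact Finset.sum_congr rfl fun k hk => by
            rw [hv k, if_neg (Finset.ne_of_mem_erase hk)]
      have e2 : ∑ k, |β k| = |β j0| + ∑ k ∈ Finset.univ.erase j0, |β k| :=
        (Finset.add_sum_erase _ _ (Finset.mem_univ j0)).symm
      rw [e1, e2]; ring
    rw [hqsum, habssum] at hpert
    nlinarith [hpert]
  have hcle_S : ∀ j0 : {j // j ∈ S}, |c j0.1| ≤ lam := fun j0 => (hkkt j0).1
  set sg : {j // j ∈ S} → ℝ := fun j => c j.1 / lam with hsg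
  have hlam0 : lam ≠ 0 := ne_of_gt hlam
  have hs1 : ∀ j, |sg j| ≤ 1 := by
    intro j
    simp only [hsg]
    rw [abs_div, abs_of_pos hlam, div_le_one hlam]
    exact hcle_S j
  have hUSr : USᵀ *ᵥ r = lam • sg := by
    funext j
    have h1 : (USᵀ *ᵥ r) j = c j.1 := by
      simp only [Matrix.mulVec, dotProduct, Matrix.transpose_apply, hc, hUSapp]
    have h2 : (lam • sg) j = c j.1 := by
      simp only [Pi.smul_apply, smul_eq_mul, hsg]
      field_simp
    rw [h1, h2]
  have hUSβ : US *ᵥ β = y - r := by rw [hr, sub_sub_cancel]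
  have hGβ : G *ᵥ β = USᵀ *ᵥ y - lam • sg := by
    rw [hG, ← Matrix.mulVec_mulVec, hUSβ, Matrix.mulVec_sub, hUSr]
  have hβeq : β = G⁻¹ *ᵥ (USᵀ *ᵥ y) - lam • (G⁻¹ *ᵥ sg) := by
    have h2 : β = (G⁻¹ * G) *ᵥ β := by
      rw [Matrix.nonsing_inv_mul G hGinv, Matrix.one_mulVec]
    rw [h2, ← Matrix.mulVec_mulVec, hGβ, Matrix.mulVec_sub, Matrix.mulVec_smul]
  have hUSmul : PiS * US = US := by
    calc PiS * US = US * G⁻¹ * (USᵀ * US) := by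
          rw [hPiS, Matrix.mul_assoc (US * G⁻¹) USᵀ US]
    _ = US * (G⁻¹ * G) := by rw [← hG, Matrix.mul_assoc US G⁻¹ G]
    _ = US := by rw [Matrix.nonsing_inv_mul G hGinv, Matrix.mul_one]
  have hPiUSv : ∀ w : {j // j ∈ S} → ℝ, PiS *ᵥ (US *ᵥ w) = US *ᵥ w := by
    intro w; rw [Matrix.mulVec_mulVec, hUSmul]
  have hIy : (1 - PiS) *ᵥ y = (1 - PiS) *ᵥ (U *ᵥ ε) := by
    have h1 : y = US *ᵥ (fun j => γs j.1) + U *ᵥ ε := by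
      rw [hy, Matrix.mulVec_add, hrestrict γs hγs]
    rw [h1, Matrix.mulVec_add]
    have h2 : (1 - PiS) *ᵥ (US *ᵥ (fun j => γs j.1)) = 0 := by
      rw [Matrix.sub_mulVec, Matrix.one_mulVec, hPiUSv, sub_self]
    rw [h2, zero_add]
  have hUSβ2 : US *ᵥ β = PiS *ᵥ y - lam • (US *ᵥ (G⁻¹ *ᵥ sg)) := by
    rw [hβeq, Matrix.mulVec_sub, Matrix.mulVec_smul]
    congr 1
    rw [hPiS, ← Matrix.mulVec_mulVec, ← Matrix.mulVec_mulVec]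
  have hrdecomp : r = (1 - PiS) *ᵥ (U *ᵥ ε) + lam • (US *ᵥ (G⁻¹ *ᵥ sg)) := by
    rw [← hIy, Matrix.sub_mulVec, Matrix.one_mulVec, hr, hUSβ2]
    abel
  have hcS : ∀ j ∉ S, |c j| < lam := by
    intro j hj
    have hd := hdual sg hs1 j hj
    have heq : lam * ((fun i => U i j) ⬝ᵥ (US *ᵥ (G⁻¹ *ᵥ sg))) +
        (fun i => U i j) ⬝ᵥ ((1 - PiS) *ᵥ (U *ᵥ ε)) = c j := by
      have h1 : c j = (fun i => U i j) ⬝ᵥ r := rfl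
      rw [h1, hrdecomp, dotProduct_add, dotProduct_smul, smul_eq_mul]
      ring
    rw [heq] at hd
    exact hd
  have hcle : ∀ j, |c j| ≤ lam := by
    intro j
    by_cases hj : j ∈ S
    · exact hcle_S ⟨j, hj⟩
    · exact (hcS j hj).le
  set γh : Fin N → ℝ := fun j => if h : j ∈ S then β ⟨j, h⟩ else 0 with hγh
  have hγhS : ∀ j ∉ S, γh j = 0 := by intro j hj; simp [hγh, hj]
  have hγhrest : (fun j : {j // j ∈ S} => γh j.1) = β := by
    funext j; simp [hγh, j.2]
  have hUγh : U *ᵥ γh = US *ᵥ β := by rw [hrestrict γh hγhS, hγhrest]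
  have hresid : ∀ i, y i - (U *ᵥ γh) i = r i := by intro i; rw [hUγh]; rfl
  have hcsign : ∀ j, c j * γh j = lam * |γh j| := by
    intro j
    by_cases hj : j ∈ S
    · have h1 := (hkkt ⟨j, hj⟩).2
      have hg : γh j = β ⟨j, hj⟩ := by simp [hγh, hj]
      rw [hg]
      exact h1
    · rw [hγhS j hj]; simp
  have hterm : ∀ (j : Fin N) (z : ℝ), 0 ≤ lam * |z| - c j * z := by
    intro j z
    have h1 : c j * z ≤ |c j| * |z| := by
      calc c j * z ≤ |c j * z| := le_abs_self _
      _ = |c j| * |z| := abs_mul _ _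
    nlinarith [hcle j, abs_nonneg z]
  have key : ∀ γ : Fin N → ℝ,
      (1/2) * ∑ i, (y i - (U *ᵥ γ) i)^2 + lam * ∑ j, |γ j|
      = ((1/2) * ∑ i, (y i - (U *ᵥ γh) i)^2 + lam * ∑ j, |γh j|)
        + (1/2) * ∑ i, ((U *ᵥ (γ - γh)) i)^2
        + ∑ j, (lam * |γ j| - c j * γ j) := by
    intro γ
    have hsplit : ∀ i, y i - (U *ᵥ γ) i = r i - (U *ᵥ (γ - γh)) i := by
      intro i
      rw [Matrix.mulVec_sub]
      simp only [Pi.sub_apply]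
      linarith [hresid i]
    have hcross : ∑ i, r i * (U *ᵥ (γ - γh)) i = ∑ j, c j * (γ j - γh j) := by
      calc ∑ i, r i * (U *ᵥ (γ - γh)) i
          = ∑ i, ∑ j, r i * (U i j * (γ j - γh j)) := by
            refine Finset.sum_congr rfl fun i _ => ?_
            have h0 : (U *ᵥ (γ - γh)) i = ∑ j, U i j * (γ j - γh j) := rfl
            rw [h0, Finset.mul_sum]
        _ = ∑ j, ∑ i, r i * (U i j * (γ j - γh j)) := Finset.sum_comm
        _ = ∑ j, c j * (γ j - γh j) := by
            refine Finset.sum_congr rfl fun j _ => ?_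
            simp only [hc]
            rw [Finset.sum_mul]
            exact Finset.sum_congr rfl fun i _ => by ring
    have h1 : ∑ i, (y i - (U *ᵥ γ) i)^2
        = ∑ i, r i^2 - 2*(∑ j, c j * (γ j - γh j)) + ∑ i, ((U *ᵥ (γ - γh)) i)^2 := by
      rw [← hcross, Finset.mul_sum, ← Finset.sum_sub_distrib, ← Finset.sum_add_distrib]
      refine Finset.sum_congr rfl fun i _ => ?_
      rw [hsplit i]; ring
    have h2 : ∑ i, (y i - (U *ᵥ γh) i)^2 = ∑ i, r i^2 :=
      Finset.sum_congr rfl fun i _ => by rw [hresid i]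
    have h3 : ∑ j, (lam * |γ j| - c j * γ j)
        = lam * ∑ j, |γ j| - lam * ∑ j, |γh j| - ∑ j, c j * (γ j - γh j) := by
      have e1 : ∑ j, c j * (γ j - γh j) = ∑ j, c j * γ j - ∑ j, c j * γh j := by
        rw [← Finset.sum_sub_distrib]
        exact Finset.sum_congr rfl fun j _ => by ring
      have e2 : ∑ j, c j * γh j = lam * ∑ j, |γh j| := by
        rw [Finset.mul_sum]
        exact Finset.sum_congr rfl fun j _ => hcsign j
      have e3 : ∑ j, (lam * |γ j| - c j * γ j)
          = lam * ∑ j, |γ j| - ∑ j, c j * γ j := by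
        rw [Finset.mul_sum, ← Finset.sum_sub_distrib]
      rw [e3, e1, e2]
      ring
    rw [h1, h2, h3]
    ring
  have hminim : ∀ γ : Fin N → ℝ,
      (1/2) * ∑ i, (y i - (U *ᵥ γh) i)^2 + lam * ∑ j, |γh j| ≤
      (1/2) * ∑ i, (y i - (U *ᵥ γ) i)^2 + lam * ∑ j, |γ j| := by
    intro γ
    rw [key γ]
    have hA : 0 ≤ ∑ i, ((U *ᵥ (γ - γh)) i)^2 :=
      Finset.sum_nonneg fun i _ => sq_nonneg _
    have hB : 0 ≤ ∑ j, (lam * |γ j| - c j * γ j) :=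
      Finset.sum_nonneg fun j _ => hterm j (γ j)
    linarith
  refine ⟨γh, hminim, ?_⟩
  intro γ' hγ'
  have heqf : (1/2) * ∑ i, (y i - (U *ᵥ γ') i)^2 + lam * ∑ j, |γ' j|
      = (1/2) * ∑ i, (y i - (U *ᵥ γh) i)^2 + lam * ∑ j, |γh j| :=
    le_antisymm (hγ' γh) (hminim γ')
  have hk := key γ'
  rw [heqf] at hk
  have hA : 0 ≤ ∑ i, ((U *ᵥ (γ' - γh)) i)^2 :=
    Finset.sum_nonneg fun i _ => sq_nonneg _
  have hB : 0 ≤ ∑ j, (lam * |γ' j| - c j * γ' j) :=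
    Finset.sum_nonneg fun j _ => hterm j (γ' j)
  have hA0 : ∑ i, ((U *ᵥ (γ' - γh)) i)^2 = 0 := by linarith
  have hB0 : ∑ j, (lam * |γ' j| - c j * γ' j) = 0 := by linarith
  have hterm0 : ∀ j, lam * |γ' j| - c j * γ' j = 0 := by
    have h := (Finset.sum_eq_zero_iff_of_nonneg
      (fun j _ => hterm j (γ' j))).mp hB0
    exact fun j => h j (Finset.mem_univ j)
  have hγ'S : ∀ j ∉ S, γ' j = 0 := by
    intro j hj
    have h1 := hterm0 j
    have h2 := hcS j hj
    have h3 : c j * γ' j ≤ |c j| * |γ' j| := by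
      calc c j * γ' j ≤ |c j * γ' j| := le_abs_self _
      _ = |c j| * |γ' j| := abs_mul _ _
    by_contra hne
    have h5 : 0 < |γ' j| := abs_pos.mpr hne
    nlinarith
  have hUδ : U *ᵥ (γ' - γh) = 0 := by
    funext i
    have h := (Finset.sum_eq_zero_iff_of_nonneg
      (fun i _ => sq_nonneg ((U *ᵥ (γ' - γh)) i))).mp hA0 i (Finset.mem_univ i)
    exact sq_eq_zero_iff.mp h
  have hδS : ∀ j ∉ S, (γ' - γh) j = 0 := by
    intro j hj
    simp [hγ'S j hj, hγhS j hj]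
  have hrest0 : (fun j : {j // j ∈ S} => (γ' - γh) j.1) = 0 := by
    apply hinj
    rw [← hrestrict _ hδS]
    exact hUδ
  funext j
  by_cases hj : j ∈ S
  · have h := congrFun hrest0 ⟨j, hj⟩
    simp only [Pi.sub_apply, Pi.zero_apply] at h
    linarith
  · rw [hγ'S j hj, hγhS j hj]
end
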